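/- Let A be a commutative real algebra with unit that is formally real and finite dimensional as a real vector space. Then there is a decomposition 1 = e₁ + ... + e_k of the unit into minimal idempotents, and A decomposes as a direct sum A = A₁ ⊕ ... ⊕ A_k where A_i = e_i·A = ℝ·e_i ⊕ N_i with N_i a nilpotent ideal. -/

import Mathlib

/-- A commutative real unital algebra is *formally real* if `1 + a₁² + ⋯ + aₙ²`
is invertible for all `a₁, …, aₙ`. -/
def FormallyReal (A : Type*) [CommRing A] [Algebra ℝ A] : Prop :=
  ∀ (n : ℕ) (a : Fin n → A), IsUnit (1 + ∑ i, (a i) ^ 2)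

/-- A nonzero idempotent `e` is *minimal* if for every idempotent `e'` one has
`e * e' = e` or `e * e' = 0`. -/
def MinimalIdempotent (A : Type*) [CommRing A] (e : A) : Prop :=
  e ≠ 0 ∧ IsIdempotentElem e ∧ ∀ e' : A, IsIdempotentElem e' → e * e' = e ∨ e * e' = 0

/-- A formally real field finite dimensional over `ℝ` is `ℝ`. -/
lemma aux_real_surj {K : Type*} [Field K] [Algebra ℝ K] [FiniteDimensional ℝ K]
    (h : ∀ x : K, 1 + x ^ 2 ≠ 0) : Function.Surjective (algebraMap ℝ K) := by
  have : Algebra.IsAlgebraic ℝ K := Algebra.IsAlgebraic.of_finite ℝ K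
  let φ : K →ₐ[ℝ] ℂ := IsAlgClosed.lift
  have hinj : Function.Injective φ := φ.toRingHom.injective
  intro x
  by_cases hb : (φ x).im = 0
  · refine ⟨(φ x).re, hinj ?_⟩
    rw [AlgHom.commutes]
    apply Complex.ext
    · simp
    · simp [hb]
  · exfalso
    set y : K := ((φ x).im)⁻¹ • (x - algebraMap ℝ K (φ x).re) with hy
    have hyI : φ y = Complex.I := by
      rw [hy, map_smul, map_sub, AlgHom.commutes]
      apply Complex.ext
      · simp [Complex.real_smul]
      · simp [Complex.real_smul, inv_mul_cancel₀ hb]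
    have h0 : φ (1 + y ^ 2) = 0 := by
      rw [map_add, map_one, map_pow, hyI, Complex.I_sq]; ring
    exact h y (hinj (by rw [h0, map_zero]))

lemma aux_quot_surj {A : Type*} [CommRing A] [Algebra ℝ A] [FiniteDimensional ℝ A]
    (hA : FormallyReal A) (m : Ideal A) (hm : m.IsMaximal) (a : A) :
    ∃ r : ℝ, Ideal.Quotient.mk m a = algebraMap ℝ (A ⧸ m) r := by
  haveI := hm
  letI : Field (A ⧸ m) := Ideal.Quotient.field m
  have hfd : FiniteDimensional ℝ (A ⧸ m) :=
    Module.Finite.of_surjective (Ideal.Quotient.mkₐ ℝ m).toLinearMap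
      Ideal.Quotient.mk_surjective
  have hfr : ∀ x : A ⧸ m, 1 + x ^ 2 ≠ 0 := by
    intro x hx
    obtain ⟨b, rfl⟩ := Ideal.Quotient.mk_surjective x
    have hu := hA 1 ![b]
    simp only [Fin.sum_univ_one, Matrix.cons_val_zero] at hu
    have : IsUnit ((Ideal.Quotient.mk m) (1 + b ^ 2)) := hu.map _
    rw [map_add, map_one, map_pow, hx] at this
    exact zero_ne_one (isUnit_zero_iff.mp this)
  obtain ⟨r, hr⟩ := aux_real_surj hfr (Ideal.Quotient.mk m a)
  exact ⟨r, hr.symm⟩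

/-- A formally real, finite dimensional commutative unital real algebra admits a
decomposition `1 = e₁ + ⋯ + e_k` into all the minimal idempotents, and
`A = A₁ ⊕ ⋯ ⊕ A_k` where `A_i = e_i·A = ℝ·e_i ⊕ N_i` with `N_i` a nilpotent ideal. -/
theorem formallyReal_decomposition
    {A : Type*} [CommRing A] [Algebra ℝ A] [FiniteDimensional ℝ A]
    (hA : FormallyReal A) :
    ∃ (k : ℕ) (e : Fin k → A),
      Function.Injective e ∧
      (∀ i, MinimalIdempotent A (e i)) ∧
      (∀ f : A, MinimalIdempotent A f → ∃ i, f = e i) ∧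
      (∑ i, e i) = 1 ∧
      (∀ a : A, ∃! c : Fin k → A,
        (∀ i, c i ∈ Ideal.span ({e i} : Set A)) ∧ a = ∑ i, c i) ∧
      (∀ i, ∃ N : Ideal A, (↑N : Set A) ⊆ Ideal.span ({e i} : Set A) ∧
        (∀ x ∈ N, IsNilpotent x) ∧
        ∀ a ∈ Ideal.span ({e i} : Set A),
          ∃! p : ℝ × A, p.2 ∈ N ∧ a = p.1 • e i + p.2) := by
  classical
  haveI hart : IsArtinianRing A := IsArtinianRing.of_finite ℝ A
  haveI : Finite {I : Ideal A | I.IsMaximal} := (IsArtinianRing.setOfPred_isMaximal_finite A).to_subtype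
  letI : Fintype {I : Ideal A | I.IsMaximal} := Fintype.ofFinite _
  set ι := {I : Ideal A | I.IsMaximal} with hι
  haveI hmax : ∀ m : ι, m.1.IsMaximal := fun m => m.2
  letI : ∀ m : ι, Field (A ⧸ m.1) := fun m => Ideal.Quotient.field m.1
  set φ : A →+* ∀ m : ι, A ⧸ m.1 := Pi.ringHom fun m => Ideal.Quotient.mk m.1 with hφdef
  -- surjectivity of φ
  have hsurj : Function.Surjective φ := by
    intro v
    obtain ⟨r, hr⟩ := Ideal.pi_quotient_surjective
      (fun (m m' : ι) hne => Ideal.isCoprime_iff_sup_eq.mpr <|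
        (hmax m).coprime_of_ne (hmax m') (by rwa [Ne, Subtype.coe_inj])) v
    exact ⟨r, funext fun m => hr m⟩
  -- kernel of φ is nil
  have kermem : ∀ x : A, x ∈ RingHom.ker φ ↔ ∀ m : ι, Ideal.Quotient.mk m.1 x = 0 := by
    intro x
    rw [RingHom.mem_ker, funext_iff]
    exact Iff.rfl
  have kernil : ∀ x ∈ RingHom.ker φ, IsNilpotent x := by
    intro x hx
    rw [nilpotent_iff_mem_prime]
    intro J hJ
    haveI : J.IsMaximal := (IsArtinianRing.isPrime_iff_isMaximal J).mp hJ
    have := (kermem x).mp hx ⟨J, this⟩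
    rwa [Ideal.Quotient.eq_zero_iff_mem] at this
  -- lift the standard idempotents of the product
  obtain ⟨e', hCOI, hφe⟩ := CompleteOrthogonalIdempotents.lift_of_isNilpotent_ker φ kernil
    (CompleteOrthogonalIdempotents.single (fun m : ι => A ⧸ m.1)) (fun m => hsurj _)
  have hmk1 : ∀ m : ι, Ideal.Quotient.mk m.1 (e' m) = 1 := by
    intro m
    have h1 := congr_fun (congr_fun hφe m) m
    rw [Function.comp_apply, Pi.single_eq_same] at h1
    exact h1
  have hmk0 : ∀ m m' : ι, m' ≠ m → Ideal.Quotient.mk m'.1 (e' m) = 0 := by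
    intro m m' hne
    have h1 := congr_fun (congr_fun hφe m) m'
    rw [Function.comp_apply, Pi.single_eq_of_ne hne] at h1
    exact h1
  have hEne : ∀ m : ι, e' m ≠ 0 := by
    intro m h0
    have := hmk1 m
    rw [h0, map_zero] at this
    exact one_ne_zero this.symm
  -- key dichotomy for idempotents under e' m
  have key : ∀ (m : ι) (x : A), IsIdempotentElem x → e' m * x = x → x = 0 ∨ x = e' m := by
    intro m x hx hmul
    have hx_ne : ∀ m' : ι, m' ≠ m → Ideal.Quotient.mk m'.1 x = 0 := by
      intro m' hne
      rw [← hmul, map_mul, hmk0 m m' hne, zero_mul]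
    have hq : Ideal.Quotient.mk m.1 x = 0 ∨ Ideal.Quotient.mk m.1 x = 1 := by
      apply IsIdempotentElem.iff_eq_zero_or_one.mp
      unfold IsIdempotentElem
      rw [← map_mul, hx]
    rcases hq with hq | hq
    · left
      apply eq_of_isNilpotent_sub_of_isIdempotentElem_of_commute hx IsIdempotentElem.zero
        _ (Commute.all _ _)
      rw [sub_zero]
      apply kernil
      rw [kermem]
      intro m'
      by_cases hmm : m' = m
      · rw [hmm]; exact hq
      · exact hx_ne m' hmm
    · right
      apply eq_of_isNilpotent_sub_of_isIdempotentElem_of_commute hx (hCOI.idem m)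
        _ (Commute.all _ _)
      apply kernil
      rw [kermem]
      intro m'
      rw [map_sub]
      by_cases hmm : m' = m
      · rw [hmm, hq, hmk1 m, sub_self]
      · rw [hx_ne m' hmm, hmk0 m m' hmm, sub_self]
  -- the e' are minimal idempotents
  have hmin : ∀ m : ι, MinimalIdempotent A (e' m) := by
    intro m
    refine ⟨hEne m, hCOI.idem m, fun f hf => ?_⟩
    have hidem : IsIdempotentElem (e' m * f) := by
      unfold IsIdempotentElem
      rw [mul_mul_mul_comm, hCOI.idem m, hf]
    have hmul : e' m * (e' m * f) = e' m * f := by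
      rw [← mul_assoc, hCOI.idem m]
    rcases key m _ hidem hmul with h | h
    · right; exact h
    · left; exact h
  -- every minimal idempotent is one of the e'
  have hall : ∀ f : A, MinimalIdempotent A f → ∃ m : ι, f = e' m := by
    intro f hf
    have hsum : ∑ m : ι, f * e' m = f := by
      rw [← Finset.mul_sum, hCOI.complete, mul_one]
    have hex : ∃ m : ι, f * e' m ≠ 0 := by
      by_contra hc
      push_neg at hc
      apply hf.1
      rw [← hsum, Finset.sum_eq_zero fun m _ => hc m]
    obtain ⟨m, hm⟩ := hex
    rcases hf.2.2 (e' m) (hCOI.idem m) with h | h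
    · have hmul : e' m * f = f := by rw [mul_comm]; exact h
      rcases key m f hf.2.1 hmul with h0 | h0
      · exact absurd h0 hf.1
      · exact ⟨m, h0⟩
    · exact absurd h hm
  -- reindex by Fin k
  set k := Fintype.card ι with hk
  set σ : Fin k ≃ ι := (Fintype.equivFin ι).symm with hσ
  refine ⟨k, fun i => e' (σ i), ?_, ?_, ?_, ?_, ?_, ?_⟩
  · -- injectivity
    intro i j hij
    apply σ.injective
    by_contra hne
    have h0 : Ideal.Quotient.mk (σ j).1 (e' (σ i)) = 0 :=
      hmk0 (σ i) (σ j) (fun h => hne h.symm)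
    have h1 : Ideal.Quotient.mk (σ j).1 (e' (σ i)) = 1 := by
      simp only at hij
      rw [hij, hmk1 (σ j)]
    rw [h0] at h1
    exact zero_ne_one h1
  · exact fun i => hmin (σ i)
  · intro f hf
    obtain ⟨m, hm⟩ := hall f hf
    exact ⟨σ.symm m, by rw [hm]; exact congrArg e' (σ.apply_symm_apply m).symm⟩
  · rw [Equiv.sum_comp σ e', hCOI.complete]
  · -- unique decomposition into the ideals (e_i)
    intro a
    have hsum1 : ∑ i : Fin k, e' (σ i) = 1 := by rw [Equiv.sum_comp σ e', hCOI.complete]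
    refine ⟨fun i => e' (σ i) * a, ⟨fun i => Ideal.mem_span_singleton.mpr ⟨a, rfl⟩, ?_⟩, ?_⟩
    · rw [← Finset.sum_mul, hsum1, one_mul]
    · rintro c ⟨hcmem, hcsum⟩
      funext j
      have hdvd : ∀ i, e' (σ i) ∣ c i := fun i => Ideal.mem_span_singleton.mp (hcmem i)
      choose x hx using hdvd
      have : e' (σ j) * a = c j := by
        rw [hcsum, Finset.mul_sum]
        rw [Finset.sum_eq_single j]
        · rw [hx j, ← mul_assoc, hCOI.idem (σ j)]
        · intro i _ hne
          rw [hx i, ← mul_assoc, hCOI.ortho (fun h => hne (σ.injective h).symm : σ j ≠ σ i),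
            zero_mul]
        · intro h; exact absurd (Finset.mem_univ j) h
      exact this.symm
  · -- the Weil algebra structure of each block
    intro i
    set m : ι := σ i with hm
    set E : A := e' m with hE
    refine ⟨RingHom.ker φ ⊓ Ideal.span {E}, ?_, ?_, ?_⟩
    · intro x hx
      exact (Submodule.mem_inf.mp hx).2
    · intro x hx
      exact kernil x (Submodule.mem_inf.mp hx).1
    · intro a ha
      obtain ⟨x, hxa⟩ := Ideal.mem_span_singleton.mp ha
      obtain ⟨r, hr⟩ := aux_quot_surj hA m.1 (hmax m) a
      have hmkzero : ∀ m' : ι, m' ≠ m → Ideal.Quotient.mk m'.1 a = 0 := by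
        intro m' hne
        rw [hxa, map_mul, hmk0 m m' hne, zero_mul]
      have hsmul : ∀ (s : ℝ) (m' : ι),
          Ideal.Quotient.mk m'.1 (s • E) = s • Ideal.Quotient.mk m'.1 E := by
        intro s m'
        rw [← Ideal.Quotient.mkₐ_eq_mk ℝ m'.1, map_smul]
      have hmem : a - r • E ∈ RingHom.ker φ ⊓ Ideal.span {E} := by
        rw [Submodule.mem_inf]
        constructor
        · rw [kermem]
          intro m'
          rw [map_sub, hsmul r m']
          by_cases hmm : m' = m
          · rw [hmm, hr, hmk1 m, Algebra.smul_def, mul_one]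
            exact sub_self _
          · rw [hmk0 m m' hmm, hmkzero m' hmm, smul_zero, sub_self]
        · apply Submodule.sub_mem _ ha
          rw [Algebra.smul_def]
          exact Ideal.mem_span_singleton.mpr ⟨algebraMap ℝ A r, mul_comm _ _⟩
      refine ⟨(r, a - r • E), ⟨hmem, by module⟩, ?_⟩
      rintro ⟨s, n⟩ ⟨hn, heq⟩
      have hn0 : Ideal.Quotient.mk m.1 n = 0 :=
        (kermem n).mp (Submodule.mem_inf.mp hn).1 m
      have hsr : s = r := by
        have h1 : Ideal.Quotient.mk m.1 a = algebraMap ℝ (A ⧸ m.1) s := by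
          rw [heq, map_add, hsmul s m, hmk1 m, hn0, add_zero,
            Algebra.smul_def, mul_one]
        have h2 : algebraMap ℝ (A ⧸ m.1) s = algebraMap ℝ (A ⧸ m.1) r := by
          rw [← h1, hr]
        exact (algebraMap ℝ (A ⧸ m.1)).injective h2
      have hns : n = a - r • E := by
        rw [← hsr, heq]; module
      rw [Prod.ext_iff]
      exact ⟨hsr, hns⟩
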